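/- Let I be a maximal ideal on ℕ. Then for every α > 0, the ideal I is not α-thick: there exists a set A ∈ I such that for some c > 0 there are infinitely many n with ℕ ∩ [n, n + c·n^α] ⊆ A. (Indeed, with a₁ := 1 and a_{n+1} := 2^{a_n}, exactly one of A := ℕ ∩ ⋃_n [a_{2n}, a_{2n+1}] and its complement belongs to I, and each of these sets contains, for every c > 0, infinitely many intervals of the form ℕ ∩ [n, n + c·n^α].) -/

import Mathlib

open Filter Set Topology

/-- `λ_n(A) = |A ∩ [1,n]| / n`. -/
noncomputable def lam (n : ℕ) (A : Set ℕ) : ℝ :=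
  ((A ∩ Set.Icc 1 n).ncard : ℝ) / n

/-- The density zero ideal `Z = {A ⊆ ℕ : lim_n λ_n(A) = 0}`. -/
def Zstat : Set (Set ℕ) :=
  {A : Set ℕ | Tendsto (fun n => lam n A) atTop (nhds 0)}

/-- A (possibly improper) ideal on ℕ: contains all finite sets, closed under
subsets and finite unions. -/
def IsIdeal (I : Set (Set ℕ)) : Prop :=
  (∀ A : Set ℕ, A.Finite → A ∈ I) ∧
    (∀ ⦃A B : Set ℕ⦄, A ⊆ B → B ∈ I → A ∈ I) ∧
    (∀ ⦃A B : Set ℕ⦄, A ∈ I → B ∈ I → A ∪ B ∈ I)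

/-- A proper ideal on ℕ. -/
def IsProperIdeal (I : Set (Set ℕ)) : Prop :=
  IsIdeal I ∧ (Set.univ : Set ℕ) ∉ I

/-- `I`-statistical convergence of a sequence `x` to `l`:
`{n : λ_n({k : x_k ∉ U}) ≥ ε} ∈ I` for every neighborhood `U` of `l` and `ε > 0`. -/
def IStatConv (I : Set (Set ℕ)) {X : Type*} [TopologicalSpace X]
    (x : ℕ → X) (l : X) : Prop :=
  ∀ U ∈ nhds l, ∀ ε : ℝ, 0 < ε → {n : ℕ | ε ≤ lam n {k : ℕ | x k ∉ U}} ∈ I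

/-- The tower sequence `a 0 = 1`, `a (k+1) = 2 ^ a k`. -/
def aa : ℕ → ℕ
  | 0 => 1
  | k + 1 => 2 ^ aa k

lemma aa_strictMono : StrictMono aa := by
  apply strictMono_nat_of_lt_succ
  intro n
  exact Nat.lt_two_pow_self

lemma key (α : ℝ) : ∃ N : ℕ, ∀ n : ℕ, N ≤ n → (n : ℝ) + (n : ℝ) ^ α < 2 ^ n := by
  set d : ℕ := max 1 ⌈α⌉₊ with hd
  have h0 := tendsto_pow_const_div_const_pow_of_one_lt d (by norm_num : (1 : ℝ) < 2)
  have h1 : ∀ᶠ n : ℕ in atTop, (n : ℝ) ^ d / 2 ^ n < 1 / 2 :=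
    h0.eventually (gt_mem_nhds (by norm_num : (0 : ℝ) < 1 / 2))
  obtain ⟨N, hN⟩ := (h1.and (eventually_ge_atTop 1)).exists_forall_of_atTop
  refine ⟨N, fun n hn => ?_⟩
  obtain ⟨hlt, hn1⟩ := hN n hn
  have h2 : (0 : ℝ) < 2 ^ n := by positivity
  have h3 : 2 * (n : ℝ) ^ d < 2 ^ n := by
    have := (div_lt_iff₀ h2).mp hlt
    linarith
  have hn1' : (1 : ℝ) ≤ (n : ℝ) := by exact_mod_cast hn1
  have h4 : (n : ℝ) ≤ (n : ℝ) ^ d := by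
    calc (n : ℝ) = (n : ℝ) ^ 1 := (pow_one _).symm
    _ ≤ (n : ℝ) ^ d := pow_le_pow_right₀ hn1' (le_max_left _ _)
  have h5 : (n : ℝ) ^ α ≤ (n : ℝ) ^ d := by
    have : (n : ℝ) ^ α ≤ (n : ℝ) ^ (d : ℝ) := by
      apply Real.rpow_le_rpow_of_exponent_le hn1'
      calc α ≤ (⌈α⌉₊ : ℝ) := Nat.le_ceil α
      _ ≤ (d : ℝ) := by exact_mod_cast le_max_right 1 ⌈α⌉₊
    rwa [Real.rpow_natCast] at this
  linarith

/-- a maximal ideal `I` is not `α`-thick for any `α > 0`: some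
`A ∈ I` contains, for some `c > 0`, the block `ℕ ∩ [n, n + c·n^α]` for infinitely
many `n`. -/
theorem stmt_12 (I : Set (Set ℕ)) (hI : IsProperIdeal I)
    (hmax : ∀ A : Set ℕ, A ∈ I ∨ Aᶜ ∈ I)
    (α : ℝ) (hα : 0 < α) :
    ∃ A ∈ I, ∃ c : ℝ, 0 < c ∧
      {n : ℕ | ∀ m : ℕ, n ≤ m → (m : ℝ) ≤ (n : ℝ) + c * (n : ℝ) ^ α → m ∈ A}.Infinite := by
  classical
  set A : Set ℕ := ⋃ k, Ico (aa (2 * k)) (aa (2 * k + 1)) with hAdef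
  obtain ⟨N, hN⟩ := key α
  have haa_le : ∀ n : ℕ, n ≤ aa n := fun n => aa_strictMono.le_apply
  rcases hmax A with h | h
  · refine ⟨A, h, 1, one_pos, ?_⟩
    apply Set.infinite_of_injective_forall_mem (f := fun k : ℕ => aa (2 * (k + N)))
    · intro i j hij
      have := aa_strictMono.injective hij
      omega
    · intro k m hm hm2
      set n := aa (2 * (k + N)) with hn
      have hNn : N ≤ n := le_trans (by omega) (haa_le (2 * (k + N)))
      have hkey := hN n hNn
      have haeq : aa (2 * (k + N) + 1) = 2 ^ n := rfl
      have hmlt : (m : ℝ) < ((2 ^ n : ℕ) : ℝ) := by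
        push_cast
        calc (m : ℝ) ≤ (n : ℝ) + 1 * (n : ℝ) ^ α := hm2
        _ < 2 ^ n := by linarith
      have hm3 : m < aa (2 * (k + N) + 1) := by
        rw [haeq]
        exact_mod_cast hmlt
      exact Set.mem_iUnion.mpr ⟨k + N, ⟨hm, hm3⟩⟩
  · refine ⟨Aᶜ, h, 1, one_pos, ?_⟩
    apply Set.infinite_of_injective_forall_mem (f := fun k : ℕ => aa (2 * (k + N) + 1))
    · intro i j hij
      have := aa_strictMono.injective hij
      omega
    · intro k m hm hm2
      set n := aa (2 * (k + N) + 1) with hn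
      have hNn : N ≤ n := le_trans (by omega) (haa_le (2 * (k + N) + 1))
      have hkey := hN n hNn
      have haeq : aa (2 * (k + N) + 2) = 2 ^ n := rfl
      have hmlt : (m : ℝ) < ((2 ^ n : ℕ) : ℝ) := by
        push_cast
        calc (m : ℝ) ≤ (n : ℝ) + 1 * (n : ℝ) ^ α := hm2
        _ < 2 ^ n := by linarith
      have hm3 : m < aa (2 * (k + N) + 2) := by
        rw [haeq]
        exact_mod_cast hmlt
      -- show m ∉ A
      intro hmA
      obtain ⟨j, hj1, hj2⟩ := Set.mem_iUnion.mp hmA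
      rcases le_or_gt j (k + N) with hjk | hjk
      · have : aa (2 * j + 1) ≤ aa (2 * (k + N) + 1) :=
          aa_strictMono.monotone (by omega)
        omega
      · have : aa (2 * (k + N) + 2) ≤ aa (2 * j) :=
          aa_strictMono.monotone (by omega)
        omega
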